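/- arXiv:2403.03975 — 2 statements merged into one kernel-verified Lean document; each statement's English description precedes it below -/
import Mathlib

section
/- Cellwise Shapley values are scale invariant: if A ∈ ℝ^{p×p} and B ∈ ℝ^{q×q} are invertible diagonal matrices, and Φ(X; M, Ω_row, Ω_col) = (X−M) ∘ (Ω_row (X−M) Ω_col), then Φ(AXB; AMB, (AΣ_row Aᵀ)⁻¹, (BᵀΣ_col B)⁻¹) = Φ(X; M, Σ_row⁻¹, Σ_col⁻¹). -/
open Matrix

/-- Cellwise Shapley values are scale invariant: for invertible diagonal matrices `A`, `B`,
transforming `X ↦ AXB`, `M ↦ AMB`, `Srow ↦ A Srow Aᵀ`, `Scol ↦ Bᵀ Scol B` leaves the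
cellwise Shapley value matrix `Φ(X) = (X−M) ∘ (Ωrow (X−M) Ωcol)` unchanged. -/
theorem cellwise_shapley_scale_invariant {p q : ℕ}
    (A : Matrix (Fin p) (Fin p) ℝ) (B : Matrix (Fin q) (Fin q) ℝ)
    (hAdiag : A.IsDiag) (hBdiag : B.IsDiag)
    (hA : IsUnit A.det) (hB : IsUnit B.det)
    (X M : Matrix (Fin p) (Fin q) ℝ)
    (Srow : Matrix (Fin p) (Fin p) ℝ) (Scol : Matrix (Fin q) (Fin q) ℝ)
    (hrow : Srow.PosDef) (hcol : Scol.PosDef) :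
    Matrix.hadamard (A * X * B - A * M * B)
        ((A * Srow * Aᵀ)⁻¹ * (A * X * B - A * M * B) * (Bᵀ * Scol * B)⁻¹)
      = Matrix.hadamard (X - M) (Srow⁻¹ * (X - M) * Scol⁻¹) := by
  have hAt : Aᵀ = A := by
    ext i j
    by_cases h : i = j
    · subst h; simp [Matrix.transpose_apply]
    · rw [Matrix.transpose_apply, hAdiag (Ne.symm h), hAdiag h]
  have hBt : Bᵀ = B := by
    ext i j
    by_cases h : i = j
    · subst h; simp [Matrix.transpose_apply]
    · rw [Matrix.transpose_apply, hBdiag (Ne.symm h), hBdiag h]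
  have hSrow : IsUnit Srow.det := isUnit_iff_ne_zero.mpr hrow.det_pos.ne'
  have hScol : IsUnit Scol.det := isUnit_iff_ne_zero.mpr hcol.det_pos.ne'
  have hdiff : A * X * B - A * M * B = A * (X - M) * B := by
    rw [Matrix.mul_sub, Matrix.sub_mul]
  have hinv1 : (A * Srow * Aᵀ)⁻¹ = A⁻¹ * Srow⁻¹ * A⁻¹ := by
    rw [hAt, Matrix.mul_inv_rev, Matrix.mul_inv_rev, Matrix.mul_assoc]
  have hinv2 : (Bᵀ * Scol * B)⁻¹ = B⁻¹ * Scol⁻¹ * B⁻¹ := by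
    rw [hBt, Matrix.mul_inv_rev, Matrix.mul_inv_rev, Matrix.mul_assoc]
  have hAinv : A⁻¹ * A = 1 := Matrix.nonsing_inv_mul A hA
  have hBinv : B * B⁻¹ = 1 := Matrix.mul_nonsing_inv B hB
  have hmid : (A * Srow * Aᵀ)⁻¹ * (A * X * B - A * M * B) * (Bᵀ * Scol * B)⁻¹
      = A⁻¹ * (Srow⁻¹ * (X - M) * Scol⁻¹) * B⁻¹ := by
    rw [hinv1, hinv2, hdiff]
    calc A⁻¹ * Srow⁻¹ * A⁻¹ * (A * (X - M) * B) * (B⁻¹ * Scol⁻¹ * B⁻¹)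
        = A⁻¹ * Srow⁻¹ * ((A⁻¹ * A) * (X - M) * (B * B⁻¹)) * Scol⁻¹ * B⁻¹ := by
          simp only [Matrix.mul_assoc]
      _ = A⁻¹ * (Srow⁻¹ * (X - M) * Scol⁻¹) * B⁻¹ := by
          rw [hAinv, hBinv]; simp [Matrix.mul_assoc]
  rw [hmid, hdiff]
  have hAd : A = Matrix.diagonal A.diag := hAdiag.diagonal_diag.symm
  have hBd : B = Matrix.diagonal B.diag := hBdiag.diagonal_diag.symm
  have hAne : ∀ i, A.diag i ≠ 0 := by
    intro i
    have hd : A.det ≠ 0 := hA.ne_zero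
    rw [hAd, Matrix.det_diagonal] at hd
    exact Finset.prod_ne_zero_iff.mp hd i (Finset.mem_univ i)
  have hBne : ∀ j, B.diag j ≠ 0 := by
    intro j
    have hd : B.det ≠ 0 := hB.ne_zero
    rw [hBd, Matrix.det_diagonal] at hd
    exact Finset.prod_ne_zero_iff.mp hd j (Finset.mem_univ j)
  have hdA : A⁻¹ = Matrix.diagonal (fun i => (A.diag i)⁻¹) := by
    apply Matrix.inv_eq_right_inv
    nth_rewrite 1 [hAd]
    rw [Matrix.diagonal_mul_diagonal]
    convert Matrix.diagonal_one using 2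
    funext k
    exact mul_inv_cancel₀ (hAne k)
  have hdB : B⁻¹ = Matrix.diagonal (fun j => (B.diag j)⁻¹) := by
    apply Matrix.inv_eq_right_inv
    nth_rewrite 1 [hBd]
    rw [Matrix.diagonal_mul_diagonal]
    convert Matrix.diagonal_one using 2
    funext k
    exact mul_inv_cancel₀ (hBne k)
  have hprod : A * (X - M) * B = Matrix.diagonal A.diag * (X - M) * Matrix.diagonal B.diag := by
    conv_lhs => rw [hAd, hBd]
  ext i j
  simp only [Matrix.hadamard_apply]
  conv_lhs => rw [hdA, hdB, hprod]
  simp only [Matrix.diagonal_mul, Matrix.mul_diagonal]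
  have h1 : A i i ≠ 0 := by simpa using hAne i
  have h2 : B j j ≠ 0 := by simpa using hBne j
  have h1' : A.diag i ≠ 0 := hAne i
  have h2' : B.diag j ≠ 0 := hBne j
  field_simp
end

section
/- Averaging the marginal contributions over all subsets with Shapley weights recovers the closed-form Shapley value: ∑_{S ⊆ P\{k}} (|S|!(p−|S|−1)!/p!) · Δ_k md²(x̂^S) = (x_k − μ_k) ∑_{j=1}^p (x_j − μ_j) ω_{jk}, where P = {1,…,p}. -/
open Matrix Finset


lemma gauss (n : ℕ) : ∑ t ∈ range n, ((t:ℝ)+1) = n*(n+1)/2 := by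
  induction n with
  | zero => simp
  | succ n ih => rw [Finset.sum_range_succ, ih]; push_cast; ring

lemma w_sum_one {p : ℕ} (hp : 0 < p) {α : Type*} [DecidableEq α] (A : Finset α)
    (hA : A.card = p - 1) :
    ∑ S ∈ A.powerset,
      ((Nat.factorial S.card * Nat.factorial (p - S.card - 1) : ℝ) / Nat.factorial p) = 1 := by
  obtain ⟨q, rfl⟩ : ∃ q, p = q + 1 := ⟨p - 1, by omega⟩
  rw [Finset.sum_powerset_apply_card
    (fun s => ((Nat.factorial s * Nat.factorial (q + 1 - s - 1) : ℝ) / Nat.factorial (q+1))), hA]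
  simp only [Nat.add_sub_cancel, nsmul_eq_mul]
  have hterm : ∀ m ∈ range (q + 1),
      ((q.choose m : ℝ)) * ((Nat.factorial m * Nat.factorial (q + 1 - m - 1) : ℝ) / Nat.factorial (q+1))
      = (Nat.factorial q : ℝ) / Nat.factorial (q+1) := by
    intro m hm
    rw [mem_range] at hm
    have hm' : m ≤ q := by omega
    have h1 : q + 1 - m - 1 = q - m := by omega
    have h2 : q.choose m * Nat.factorial m * Nat.factorial (q - m) = Nat.factorial q :=
      Nat.choose_mul_factorial_mul_factorial hm'
    rw [h1]
    have : ((q.choose m * Nat.factorial m * Nat.factorial (q - m) : ℕ) : ℝ) = (Nat.factorial q : ℝ) := by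
      exact congrArg Nat.cast h2
    push_cast at this
    field_simp
    linarith [this]
  rw [Finset.sum_congr rfl hterm, Finset.sum_const, card_range, nsmul_eq_mul]
  have : (Nat.factorial (q+1) : ℝ) = (q+1) * Nat.factorial q := by
    rw [Nat.factorial_succ]; push_cast; ring
  rw [this]
  have h0 : (Nat.factorial q : ℝ) ≠ 0 := by positivity
  field_simp
  norm_cast

lemma w_sum_half {p : ℕ} (hp : 2 ≤ p) {α : Type*} [DecidableEq α] (B : Finset α)
    (hB : B.card = p - 2) :
    ∑ T ∈ B.powerset,
      ((Nat.factorial (T.card + 1) * Nat.factorial (p - (T.card + 1) - 1) : ℝ) / Nat.factorial p)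
      = 1/2 := by
  obtain ⟨q, rfl⟩ : ∃ q, p = q + 2 := ⟨p - 2, by omega⟩
  rw [Finset.sum_powerset_apply_card
    (fun s => ((Nat.factorial (s+1) * Nat.factorial (q + 2 - (s+1) - 1) : ℝ) / Nat.factorial (q+2))), hB]
  simp only [Nat.add_sub_cancel, nsmul_eq_mul]
  have hterm : ∀ m ∈ range (q + 1),
      ((q.choose m : ℝ)) * ((Nat.factorial (m+1) * Nat.factorial (q + 2 - (m+1) - 1) : ℝ) / Nat.factorial (q+2))
      = ((m:ℝ)+1) * (Nat.factorial q : ℝ) / Nat.factorial (q+2) := by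
    intro m hm
    rw [mem_range] at hm
    have hm' : m ≤ q := by omega
    have h1 : q + 2 - (m+1) - 1 = q - m := by omega
    have h2 : q.choose m * Nat.factorial m * Nat.factorial (q - m) = Nat.factorial q :=
      Nat.choose_mul_factorial_mul_factorial hm'
    rw [h1, Nat.factorial_succ]
    have h3 : ((q.choose m * Nat.factorial m * Nat.factorial (q - m) : ℕ) : ℝ) = (Nat.factorial q : ℝ) := by
      exact congrArg Nat.cast h2
    push_cast at h3 ⊢
    field_simp
    nlinarith [h3]
  rw [Finset.sum_congr rfl hterm]
  have : ∑ m ∈ range (q+1), ((m:ℝ)+1) * (Nat.factorial q : ℝ) / Nat.factorial (q+2)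
      = (∑ m ∈ range (q+1), ((m:ℝ)+1)) * ((Nat.factorial q : ℝ) / Nat.factorial (q+2)) := by
    rw [Finset.sum_mul]; exact Finset.sum_congr rfl fun m _ => by ring
  rw [this, gauss]
  have hfac : (Nat.factorial (q+2) : ℝ) = (q+2) * ((q+1) * Nat.factorial q) := by
    rw [Nat.factorial_succ, Nat.factorial_succ]; push_cast; ring
  rw [hfac]
  have h0 : (Nat.factorial q : ℝ) ≠ 0 := by positivity
  have h1 : ((q:ℝ)+1) ≠ 0 := by positivity
  have h2 : ((q:ℝ)+2) ≠ 0 := by positivity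
  field_simp
  push_cast
  ring

/-- Averaging the marginal contributions to the squared Mahalanobis distance over all subsets
`S ⊆ P\{k}` with the Shapley weights `|S|!(p−|S|−1)!/p!` recovers the closed-form Shapley
value `(x_k − μ_k) ∑_j (x_j − μ_j) ω_{jk}`. -/
theorem shapley_average_closed_form {p : ℕ}
    (x μ : Fin p → ℝ) (O : Matrix (Fin p) (Fin p) ℝ) (hsym : Oᵀ = O) (k : Fin p) :
    (letI xhat : Finset (Fin p) → Fin p → ℝ := fun T j => if j ∈ T then x j else μ j
     letI md2 : (Fin p → ℝ) → ℝ := fun y => (y - μ) ⬝ᵥ (O *ᵥ (y - μ))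
     ∑ S ∈ (Finset.univ.erase k).powerset,
       ((Nat.factorial S.card * Nat.factorial (p - S.card - 1) : ℝ) / Nat.factorial p) *
         (md2 (xhat (insert k S)) - md2 (xhat S)))
      = (x k - μ k) * ∑ j, (x j - μ j) * O j k := by
  set d : Fin p → ℝ := fun j => x j - μ j with hd
  -- md2 expansion lemma
  have hmd : ∀ T : Finset (Fin p),
      (((fun j => if j ∈ T then x j else μ j) - μ) ⬝ᵥ (O *ᵥ ((fun j => if j ∈ T then x j else μ j) - μ)))
        = ∑ i ∈ T, ∑ j ∈ T, d i * (O i j * d j) := by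
    intro T
    have hv : ((fun j => if j ∈ T then x j else μ j) - μ) = fun j => if j ∈ T then d j else 0 := by
      funext j
      simp only [Pi.sub_apply, hd]
      by_cases h : j ∈ T <;> simp [h]
    rw [hv]
    simp only [dotProduct, mulVec, dotProduct]
    rw [← Finset.sum_subset (Finset.subset_univ T)
      (fun i _ hi => by simp [hi])]
    refine Finset.sum_congr rfl fun i hi => ?_
    rw [if_pos hi, Finset.mul_sum,
      ← Finset.sum_subset (Finset.subset_univ T) (fun j _ hj => by simp [hj])]
    exact Finset.sum_congr rfl fun j hj => by rw [if_pos hj]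
  set A : Finset (Fin p) := Finset.univ.erase k with hA
  have hAcard : A.card = p - 1 := by
    rw [hA, Finset.card_erase_of_mem (Finset.mem_univ k), Finset.card_univ, Fintype.card_fin]
  have hp : 0 < p := k.pos
  -- marginal contribution
  have hmarg : ∀ S ∈ A.powerset,
      (∑ i ∈ insert k S, ∑ j ∈ insert k S, d i * (O i j * d j)) - ∑ i ∈ S, ∑ j ∈ S, d i * (O i j * d j)
      = d k * (O k k * d k) + ∑ j ∈ S, 2 * (d j * (O j k * d k)) := by
    intro S hS
    have hkS : k ∉ S := fun h =>
      (Finset.notMem_erase k Finset.univ) (Finset.mem_powerset.mp hS h)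
    rw [Finset.sum_insert hkS]
    rw [Finset.sum_insert hkS]
    have hrow : ∀ i ∈ S, ∑ j ∈ insert k S, d i * (O i j * d j)
        = d i * (O i k * d k) + ∑ j ∈ S, d i * (O i j * d j) := fun i _ =>
      Finset.sum_insert hkS
    rw [Finset.sum_congr rfl hrow, Finset.sum_add_distrib]
    have hOsym : ∀ j, O k j = O j k := fun j => by
      conv_rhs => rw [← hsym]
      rfl
    simp only [hOsym]
    have hcomb : ∑ j ∈ S, d k * (O j k * d j) + ∑ j ∈ S, d j * (O j k * d k)
        = ∑ j ∈ S, 2 * (d j * (O j k * d k)) := by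
      rw [← Finset.sum_add_distrib]
      exact Finset.sum_congr rfl fun j _ => by ring
    linarith [hcomb]
  simp only []
  rw [Finset.sum_congr rfl (fun S hS => by rw [hmd, hmd, hmarg S hS])]
  -- split each term
  have hsplit : ∀ S ∈ A.powerset,
      ((Nat.factorial S.card * Nat.factorial (p - S.card - 1) : ℝ) / Nat.factorial p) *
        (d k * (O k k * d k) + ∑ j ∈ S, 2 * (d j * (O j k * d k)))
      = ((Nat.factorial S.card * Nat.factorial (p - S.card - 1) : ℝ) / Nat.factorial p) *
          (d k * (O k k * d k))
        + ∑ j ∈ A, (if j ∈ S then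
            ((Nat.factorial S.card * Nat.factorial (p - S.card - 1) : ℝ) / Nat.factorial p) *
              (2 * (d j * (O j k * d k))) else 0) := by
    intro S hS
    rw [mul_add, Finset.mul_sum]
    congr 1
    rw [Finset.sum_ite_mem A S, Finset.inter_eq_right.mpr (Finset.mem_powerset.mp hS)]
  rw [Finset.sum_congr rfl hsplit, Finset.sum_add_distrib, ← Finset.sum_mul,
    w_sum_one hp A hAcard, one_mul, Finset.sum_comm]
  -- the half-count
  have hhalf : ∀ j ∈ A, ∑ S ∈ A.powerset with j ∈ S,
      ((Nat.factorial S.card * Nat.factorial (p - S.card - 1) : ℝ) / Nat.factorial p) = 1/2 := by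
    intro j hj
    have hjk : j ≠ k := Finset.ne_of_mem_erase hj
    have hp2 : 2 ≤ p := by
      have h1 : (j:ℕ) ≠ (k:ℕ) := fun h => hjk (Fin.ext h)
      have := j.isLt; have := k.isLt; omega
    have hBcard : (A.erase j).card = p - 2 := by
      rw [Finset.card_erase_of_mem hj, hAcard]; omega
    rw [← w_sum_half hp2 (A.erase j) hBcard]
    refine Finset.sum_bij' (fun S _ => S.erase j) (fun T _ => insert j T) ?_ ?_ ?_ ?_ ?_
    · intro S hS
      rw [Finset.mem_filter, Finset.mem_powerset] at hS
      exact Finset.mem_powerset.mpr (Finset.erase_subset_erase j hS.1)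
    · intro T hT
      rw [Finset.mem_powerset] at hT
      rw [Finset.mem_filter, Finset.mem_powerset]
      refine ⟨Finset.insert_subset hj (hT.trans (Finset.erase_subset _ _)), Finset.mem_insert_self _ _⟩
    · intro S hS
      rw [Finset.mem_filter] at hS
      exact Finset.insert_erase hS.2
    · intro T hT
      rw [Finset.mem_powerset] at hT
      exact Finset.erase_insert (fun hjT => Finset.notMem_erase j A (hT hjT))
    · intro S hS
      rw [Finset.mem_filter] at hS
      have hc : (S.erase j).card + 1 = S.card := by
        rw [Finset.card_erase_of_mem hS.2]
        have := Finset.card_pos.mpr ⟨j, hS.2⟩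
        omega
      rw [hc]
  -- evaluate columns
  have hcol : ∀ j ∈ A, (∑ S ∈ A.powerset, if j ∈ S then
      ((Nat.factorial S.card * Nat.factorial (p - S.card - 1) : ℝ) / Nat.factorial p) *
        (2 * (d j * (O j k * d k))) else 0) = 1/2 * (2 * (d j * (O j k * d k))) := by
    intro j hj
    rw [← Finset.sum_filter, ← Finset.sum_mul, hhalf j hj]
  rw [Finset.sum_congr rfl hcol]
  -- final algebra
  rw [← Finset.add_sum_erase Finset.univ (fun j => (x j - μ j) * O j k) (Finset.mem_univ k),
    mul_add, Finset.mul_sum, ← hA]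
  congr 1
  · simp only [hd]; ring
  · exact Finset.sum_congr rfl fun j _ => by simp only [hd]; ring
end
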